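/- For every positive integer n that is not a perfect square, the product n·g(n) is not a perfect square. -/
import Mathlib


/-- `Corr n k` says there is a square-product sequence (a nonempty finite set of
positive integers whose product is a perfect square) with least term `n` and
greatest term `k`. -/
def Corr (n k : ℕ) : Prop :=
  ∃ S : Finset ℕ, (∀ a ∈ S, 0 < a) ∧ IsSquare (∏ a ∈ S, a) ∧
    n ∈ S ∧ k ∈ S ∧ ∀ a ∈ S, n ≤ a ∧ a ≤ k

/-- Ron Graham's sequence: the least `k` such that there is a square-product
sequence with least term `n` and greatest term `k`. -/
noncomputable def g (n : ℕ) : ℕ := sInf {k | Corr n k}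

/-- The explicit witness: for `n = q a²` with `q ≥ 2`, the set
`{qa², a(qa+1), qa(a+1), (a+1)(qa+1)}` has square product. -/
lemma corr_witness (q a : ℕ) (hq : 2 ≤ q) (ha : 0 < a) :
    Corr (q * a ^ 2) ((a + 1) * (q * a + 1)) := by
  set w := q * a ^ 2 with hw
  set x := a * (q * a + 1) with hx
  set y := q * a * (a + 1) with hy
  set z := (a + 1) * (q * a + 1) with hz
  have hwx : w < x := by simp only [hw, hx]; nlinarith
  have hxy : x < y := by simp only [hx, hy]; nlinarith
  have hyz : y < z := by simp only [hy, hz]; nlinarith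
  refine ⟨{w, x, y, z}, ?_, ?_, ?_, ?_, ?_⟩
  · intro b hb
    simp only [Finset.mem_insert, Finset.mem_singleton] at hb
    rcases hb with rfl | rfl | rfl | rfl <;> positivity
  · have h1 : w ∉ ({x, y, z} : Finset ℕ) := by
      simp only [Finset.mem_insert, Finset.mem_singleton]
      push_neg
      exact ⟨hwx.ne, (hwx.trans hxy).ne, ((hwx.trans hxy).trans hyz).ne⟩
    have h2 : x ∉ ({y, z} : Finset ℕ) := by
      simp only [Finset.mem_insert, Finset.mem_singleton]
      push_neg
      exact ⟨hxy.ne, (hxy.trans hyz).ne⟩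
    have h3 : y ∉ ({z} : Finset ℕ) := by
      simp only [Finset.mem_singleton]
      exact hyz.ne
    rw [Finset.prod_insert h1, Finset.prod_insert h2, Finset.prod_insert h3,
      Finset.prod_singleton]
    exact ⟨q * a ^ 2 * (a + 1) * (q * a + 1), by simp only [hw, hx, hy, hz]; ring⟩
  · simp
  · simp [Finset.mem_insert]
  · intro b hb
    simp only [Finset.mem_insert, Finset.mem_singleton] at hb
    rcases hb with rfl | rfl | rfl | rfl
    · exact ⟨le_refl _, ((hwx.trans hxy).trans hyz).le⟩
    · exact ⟨hwx.le, (hxy.trans hyz).le⟩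
    · exact ⟨(hwx.trans hxy).le, hyz.le⟩
    · exact ⟨((hwx.trans hxy).trans hyz).le, le_refl _⟩

theorem mul_g_not_square (n : ℕ) (hn : 0 < n) (hns : ¬ IsSquare n) :
    ¬ IsSquare (n * g n) := by
  intro hsq
  obtain ⟨q, b, hq0, hb0, hqb, hqsf⟩ := Nat.sq_mul_squarefree_of_pos hn
  -- n = b ^ 2 * q
  have hq2 : 2 ≤ q := by
    match q, hqsf, hqb with
    | 0, hqsf, _ => exact absurd hqsf not_squarefree_zero
    | 1, _, hqb => exact absurd ⟨b, by rw [← hqb]; ring⟩ hns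
    | (m+2), _, _ => omega
  have hcorr : Corr n ((b + 1) * (q * b + 1)) := by
    have := corr_witness q b hq2 hb0
    rwa [show q * b ^ 2 = n by rw [← hqb]; ring] at this
  have hne : {k | Corr n k}.Nonempty := ⟨_, hcorr⟩
  have hgle : g n ≤ (b + 1) * (q * b + 1) := Nat.sInf_le hcorr
  have hglt : g n < q * (b + 1) ^ 2 := by
    calc g n ≤ (b + 1) * (q * b + 1) := hgle
    _ < q * (b + 1) ^ 2 := by nlinarith
  have hgmem : Corr n (g n) := Nat.sInf_mem hne
  have hng : n ≤ g n := by
    obtain ⟨S, _, _, hnS, _, hbound⟩ := hgmem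
    exact (hbound n hnS).2
  -- from hsq : IsSquare (n * g n), deduce g n = q * e ^ 2
  obtain ⟨c, hc⟩ := hsq
  have hc' : q * b ^ 2 * g n = c ^ 2 := by
    rw [show q * b ^ 2 = n by rw [← hqb]; ring, hc]; ring
  have hbc : b ∣ c := by
    have h2 : b ^ 2 ∣ c ^ 2 := ⟨q * g n, by rw [← hc']; ring⟩
    exact (Nat.pow_dvd_pow_iff two_ne_zero).mp h2
  obtain ⟨d, rfl⟩ := hbc
  have hqd : q * g n = d ^ 2 := by
    have hb2 : (0:ℕ) < b ^ 2 := by positivity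
    have : b ^ 2 * (q * g n) = b ^ 2 * d ^ 2 := by
      rw [show b ^ 2 * (q * g n) = q * b ^ 2 * g n from by ring, hc']; ring
    exact Nat.eq_of_mul_eq_mul_left hb2 this
  have hqdvd : q ∣ d := by
    have : q ∣ d ^ 2 := ⟨g n, hqd.symm⟩
    exact (hqsf.dvd_pow_iff_dvd two_ne_zero).mp this
  obtain ⟨e, rfl⟩ := hqdvd
  have hge : g n = q * e ^ 2 := by
    have hq0' : 0 < q := by omega
    have : q * g n = q * (q * e ^ 2) := by rw [hqd]; ring
    exact Nat.eq_of_mul_eq_mul_left hq0' this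
  -- bounds force e = b, so g n = n
  have hebound : b ≤ e ∧ e < b + 1 := by
    constructor
    · by_contra h
      push_neg at h
      have : g n < n := by
        rw [hge, ← hqb]
        have : e ^ 2 < b ^ 2 := by nlinarith
        nlinarith
      omega
    · by_contra h
      push_neg at h
      have : q * (b + 1) ^ 2 ≤ g n := by
        rw [hge]
        have : (b + 1) ^ 2 ≤ e ^ 2 := Nat.pow_le_pow_left h 2
        nlinarith
      omega
  have heb : e = b := by omega
  have hgn : g n = n := by rw [hge, heb, ← hqb]; ring
  -- Corr n n forces S = {n}, so n is a square
  rw [hgn] at hgmem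
  obtain ⟨S, _, hSsq, hnS, _, hbound⟩ := hgmem
  have hSeq : S = {n} := by
    apply Finset.eq_singleton_iff_unique_mem.mpr
    exact ⟨hnS, fun a ha => le_antisymm (hbound a ha).2 (hbound a ha).1⟩
  rw [hSeq, Finset.prod_singleton] at hSsq
  exact hns hSsq
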